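/- Let f : {1,…,N} → ℝ₊ and define, for each i, the quantity B(i,j,k,l) = f_k f_l (1+f_i)(1+f_j) − f_i f_j (1+f_k)(1+f_l). If f_m = 1/(exp(α ε_m + β) − 1) with ε_m = c·m + d for constants α > 0, β, c, d ∈ ℝ (so that exp(α ε_m + β) > 1 for all m), then B(i,j,k,l) = 0 whenever i + j = k + l. -/

import Mathlib

lemma BE_balance_aux (a b e g : ℝ) (ha : a - 1 ≠ 0) (hb : b - 1 ≠ 0)
    (he : e - 1 ≠ 0) (hg : g - 1 ≠ 0) (hE : a * b = e * g) :
    1 / (e - 1) * (1 / (g - 1)) * (1 + 1 / (a - 1)) * (1 + 1 / (b - 1)) -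
      1 / (a - 1) * (1 / (b - 1)) * (1 + 1 / (e - 1)) * (1 + 1 / (g - 1)) = 0 := by
  field_simp
  linear_combination hE

/-- Discrete Bose-Einstein distributions `f_m = 1/(exp(α(c m + d) + β) − 1)` on an
equally spaced grid annihilate the bosonic collision balance
`B(i,j,k,l) = f_k f_l (1+f_i)(1+f_j) − f_i f_j (1+f_k)(1+f_l)` whenever `i+j = k+l`. -/
theorem discrete_BE_balance (α β c d : ℝ) (hα : 0 < α) (f : ℕ → ℝ)
    (hf : ∀ m, f m = 1 / (Real.exp (α * (c * m + d) + β) - 1))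
    (hexp : ∀ m : ℕ, 1 < Real.exp (α * (c * m + d) + β))
    (i j k l : ℕ) (h : i + j = k + l) :
    f k * f l * (1 + f i) * (1 + f j) - f i * f j * (1 + f k) * (1 + f l) = 0 := by
  have hne : ∀ m : ℕ, Real.exp (α * (c * m + d) + β) - 1 ≠ 0 := fun m =>
    sub_ne_zero.mpr (hexp m).ne'
  have hE : Real.exp (α * (c * i + d) + β) * Real.exp (α * (c * j + d) + β)
      = Real.exp (α * (c * k + d) + β) * Real.exp (α * (c * l + d) + β) := by
    rw [← Real.exp_add, ← Real.exp_add]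
    congr 1
    have hcast : (i : ℝ) + j = (k : ℝ) + l := by exact_mod_cast congrArg (Nat.cast : ℕ → ℝ) h
    linear_combination α * c * hcast
  rw [hf i, hf j, hf k, hf l]
  exact BE_balance_aux _ _ _ _ (hne i) (hne j) (hne k) (hne l) hE
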